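/- (Double robustness over the participation model.) On a finite probability space with S, A ∈ {0,1}, X discrete, e_1(x) = P[A=1|X=x,S=1] ∈ (0,1), e_0 = 1−e_1, let q: range(X) → (0,1] be an arbitrary function (a possibly misspecified participation model), and let g_a(x) = E[Y | X=x, S=1, A=a] be the true outcome regressions, g(X,A) = A·g_1(X)+(1−A)·g_0(X). Then the doubly robust function φ_q = S·(A − e_1(X))/(q(X)·e_1(X)·e_0(X))·(Y − g(X,A)) + g_1(X) − g_0(X) satisfies E[φ_q | X=x] = g_1(x) − g_0(x) for every x in the support of X with P[X=x, S=1, A=a] > 0 for a = 0,1. -/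

import Mathlib

open scoped Classical
open Finset

/-- Probability of an event on a finite probability space with weights `P`. -/
noncomputable def prW {Ω : Type*} [Fintype Ω] (P : Ω → ℝ) (E : Ω → Prop) : ℝ :=
  ∑ ω, if E ω then P ω else 0

/-- Conditional expectation of `f` given the event `E`: `E[f · 1_E] / P(E)`. -/
noncomputable def cexp {Ω : Type*} [Fintype Ω] (P : Ω → ℝ) (f : Ω → ℝ) (E : Ω → Prop) : ℝ :=
  (∑ ω, if E ω then P ω * f ω else 0) / prW P E

lemma mySum_ite_irrel {Ω : Type*} [Fintype Ω] {p : Ω → Prop} (i1 i2 : ∀ ω, Decidable (p ω))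
    (f : Ω → ℝ) :
    (∑ ω, @ite _ (p ω) (i1 ω) (f ω) 0) = (∑ ω, @ite _ (p ω) (i2 ω) (f ω) 0) :=
  Finset.sum_congr rfl fun ω _ => by congr

/-- Double robustness over the participation model: with the true outcome regressions
    `gₐ(x) = E[Y | X=x, S=1, A=a]` and an arbitrary participation model `q : 𝒳 → (0,1]`,
    the augmented function `φ_q` has conditional mean `g₁(x) − g₀(x)` given `X = x`. -/
theorem double_robustness_participation_model
    {Ω 𝒳 : Type*} [Fintype Ω]
    (P : Ω → ℝ) (hP0 : ∀ ω, 0 ≤ P ω) (hP1 : ∑ ω, P ω = 1)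
    (S A Y : Ω → ℝ) (X : Ω → 𝒳)
    (hS : ∀ ω, S ω = 0 ∨ S ω = 1) (hA : ∀ ω, A ω = 0 ∨ A ω = 1)
    (e1 e0 : 𝒳 → ℝ)
    (he1 : ∀ x, e1 x = cexp P (fun ω => if A ω = 1 then 1 else 0)
      (fun ω => X ω = x ∧ S ω = 1))
    (he0 : ∀ x, e0 x = 1 - e1 x)
    (he1pos : ∀ x, 0 < prW P (fun ω => X ω = x) → 0 < e1 x ∧ e1 x < 1)
    -- a possibly misspecified participation model
    (q : 𝒳 → ℝ) (hq : ∀ x, 0 < q x ∧ q x ≤ 1)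
    -- the true outcome regressions
    (g0 g1 : 𝒳 → ℝ)
    (hg1 : ∀ x, g1 x = cexp P Y (fun ω => X ω = x ∧ S ω = 1 ∧ A ω = 1))
    (hg0 : ∀ x, g0 x = cexp P Y (fun ω => X ω = x ∧ S ω = 1 ∧ A ω = 0))
    (φq : Ω → ℝ)
    (hφq : ∀ ω, φq ω =
      S ω * (A ω - e1 (X ω)) / (q (X ω) * e1 (X ω) * e0 (X ω)) *
        (Y ω - (A ω * g1 (X ω) + (1 - A ω) * g0 (X ω)))
      + g1 (X ω) - g0 (X ω)) :
    ∀ x, 0 < prW P (fun ω => X ω = x) →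
      0 < prW P (fun ω => X ω = x ∧ S ω = 1 ∧ A ω = 1) →
      0 < prW P (fun ω => X ω = x ∧ S ω = 1 ∧ A ω = 0) →
      cexp P φq (fun ω => X ω = x) = g1 x - g0 x := by

  intro x hx h11 h10
  have hsplit : ∀ (E : Ω → Prop) (c : ℝ),
      (∑ ω, if E ω then P ω * (Y ω - c) else 0)
        = (∑ ω, if E ω then P ω * Y ω else 0) - c * prW P E := by
    intro E c
    rw [prW, Finset.mul_sum, ← Finset.sum_sub_distrib]
    apply Finset.sum_congr rfl
    intro ω _
    split <;> ring
  have key1 : (∑ ω, if X ω = x ∧ S ω = 1 ∧ A ω = 1 then P ω * (Y ω - g1 x) else 0) = 0 := by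
    have h := hg1 x
    rw [cexp, eq_div_iff (ne_of_gt h11)] at h
    have h2 := hsplit (fun ω => X ω = x ∧ S ω = 1 ∧ A ω = 1) (g1 x)
    rw [← h, sub_self] at h2
    exact (mySum_ite_irrel _ _ _).trans h2
  have key0 : (∑ ω, if X ω = x ∧ S ω = 1 ∧ A ω = 0 then P ω * (Y ω - g0 x) else 0) = 0 := by
    have h := hg0 x
    rw [cexp, eq_div_iff (ne_of_gt h10)] at h
    have h2 := hsplit (fun ω => X ω = x ∧ S ω = 1 ∧ A ω = 0) (g0 x)
    rw [← h, sub_self] at h2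
    exact (mySum_ite_irrel _ _ _).trans h2
  have main : (∑ ω, if X ω = x then P ω * φq ω else 0)
      = (1 - e1 x) / (q x * e1 x * e0 x)
          * (∑ ω, if X ω = x ∧ S ω = 1 ∧ A ω = 1 then P ω * (Y ω - g1 x) else 0)
        + (0 - e1 x) / (q x * e1 x * e0 x)
          * (∑ ω, if X ω = x ∧ S ω = 1 ∧ A ω = 0 then P ω * (Y ω - g0 x) else 0)
        + (g1 x - g0 x) * prW P (fun ω => X ω = x) := by
    rw [prW, Finset.mul_sum, Finset.mul_sum, Finset.mul_sum,
      ← Finset.sum_add_distrib, ← Finset.sum_add_distrib]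
    apply Finset.sum_congr rfl
    intro ω _
    by_cases hX : X ω = x
    · rcases hS ω with hs | hs <;> rcases hA ω with ha | ha <;>
        simp only [hφq ω, hX, hs, ha, if_pos, if_neg, and_true, and_false, true_and] <;>
        norm_num <;> ring
    · simp [hX]
  rw [cexp, main, key1, key0]
  field_simp
  simp
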